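/- Let C be a commutative ring, R an associative unital C-algebra, and T : R → R → C a C-bilinear symmetric nondegenerate form. Let v_1, …, v_n ∈ R, let g be their Gram matrix (entries g_{ij} = T(v_i, v_j)), and set c = det g ∈ C. If the family v_1, …, v_n exhausts T and c is not nilpotent in C, then the images of v_1, …, v_n in the localized module R_c (the localization of the C-module R at the multiplicative set of powers of c) form a basis of R_c as a module over the localized ring C_c = C[c⁻¹]. -/

import Mathlib

/-- **Local Basis criterion (Theorem `exhaustbasis`).**
Let `C` be a commutative ring, `R` an associative unital `C`-algebra, and
`T : R → R → C` a `C`-bilinear symmetric nondegenerate form.  Let `v 1, …, v n ∈ R`,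
let `g` be their Gram matrix (entries `g i j = T (v i) (v j)`) and set `c = det g`.
If the family `v` exhausts `T` and `c` is not nilpotent in `C`, then the images of
the `v i` in the localized module `R_c` (the localization of the `C`-module `R` at
the powers of `c`) form a basis of `R_c` over the localized ring `C_c = C[c⁻¹]`. -/
theorem basis_localizedModule_of_exhausts_of_not_isNilpotent_gram_det
    (C R : Type*) [CommRing C] [Ring R] [Algebra C R]
    (T : R →ₗ[C] R →ₗ[C] C)
    (hsymm : ∀ r s : R, T r s = T s r)
    (hnondeg : ∀ r : R, r ≠ 0 → ∃ s : R, T r s ≠ 0)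
    (n : ℕ) (v : Fin n → R)
    (g : Matrix (Fin n) (Fin n) C)
    (hg : ∀ i j, g i j = T (v i) (v j))
    (hexh : ∀ r : R, r ≠ 0 → ∃ i, T (v i) r ≠ 0)
    (c : C) (hc : c = g.det)
    (hnil : ¬ IsNilpotent c) :
    ∃ b : Module.Basis (Fin n) (Localization (Submonoid.powers c))
        (LocalizedModule (Submonoid.powers c) R),
      ∀ i, b i = LocalizedModule.mkLinearMap (Submonoid.powers c) R (v i) := by
  set S := Submonoid.powers c with hS
  set L := Localization S with hL
  set f := LocalizedModule.mkLinearMap S R with hf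
  set w : Fin n → LocalizedModule S R := fun i => f (v i) with hw
  -- the localized bilinear pairings with the `v j`
  set φ : Fin n → (LocalizedModule S R →ₗ[L] L) := fun j =>
    IsLocalizedModule.mapExtendScalars S f (Algebra.linearMap C L) L (T (v j)) with hφ
  have hφf : ∀ j (r : R), φ j (f r) = algebraMap C L (T (v j) r) := by
    intro j r
    exact IsLocalizedModule.map_apply S f (Algebra.linearMap C L) (T (v j)) r
  -- the localized Gram matrix
  set G : Matrix (Fin n) (Fin n) L := g.map (algebraMap C L) with hG
  have hcu : IsUnit (algebraMap C L c) :=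
    IsLocalization.map_units L (⟨c, Submonoid.mem_powers c⟩ : S)
  have hGdet : IsUnit G.det := by
    have hde : G.det = algebraMap C L c := by
      rw [hG, hc, ← RingHom.mapMatrix_apply, ← RingHom.map_det]
    rw [hde]; exact hcu
  -- linear independence
  have hli : LinearIndependent L w := by
    rw [Fintype.linearIndependent_iff]
    intro a ha
    have hmv : G.mulVec a = 0 := by
      funext j
      have := congrArg (φ j) ha
      simp only [map_sum, map_smul, map_zero] at this
      simpa [Matrix.mulVec, dotProduct, hw, hG, Matrix.map_apply, hφf, hg,
        smul_eq_mul, mul_comm] using this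
    have : a = 0 := by
      have h1 : (G⁻¹ * G).mulVec a = a := by
        rw [Matrix.nonsing_inv_mul G hGdet, Matrix.one_mulVec]
      rw [← Matrix.mulVec_mulVec, hmv, Matrix.mulVec_zero] at h1
      exact h1.symm
    intro i; rw [this]; rfl
  -- key spanning fact in `R` : `c • r` lies in the `C`-span of the `v i`
  have hkey : ∀ r : R, ∃ u : Fin n → C, c • r = ∑ i, u i • v i := by
    intro r
    set t : Fin n → C := fun j => T (v j) r with ht
    refine ⟨g.adjugate.mulVec t, ?_⟩
    by_contra hne
    have hr' : c • r - ∑ i, (g.adjugate.mulVec t) i • v i ≠ 0 := sub_ne_zero.mpr hne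
    obtain ⟨j, hj⟩ := hexh _ hr'
    apply hj
    have hTj : T (v j) (c • r - ∑ i, g.adjugate.mulVec t i • v i)
        = c * t j - ∑ i, g j i * g.adjugate.mulVec t i := by
      simp [map_sub, map_sum, map_smul, smul_eq_mul, hg, mul_comm]
      rfl
    rw [hTj]
    have : ∑ i, g j i * g.adjugate.mulVec t i = (g.mulVec (g.adjugate.mulVec t)) j := by
      simp [Matrix.mulVec, dotProduct]
    rw [this, Matrix.mulVec_mulVec, Matrix.mul_adjugate, ← hc, Matrix.smul_mulVec,
      Matrix.one_mulVec]
    simp [smul_eq_mul]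
  -- spanning of the localized module
  have hsp : ⊤ ≤ Submodule.span L (Set.range w) := by
    have hfr : ∀ r : R, f r ∈ Submodule.span L (Set.range w) := by
      intro r
      obtain ⟨u, hu⟩ := hkey r
      have h1 : f (c • r) ∈ Submodule.span L (Set.range w) := by
        rw [hu, map_sum]
        refine Submodule.sum_mem _ fun i _ => ?_
        rw [map_smul]
        exact Submodule.smul_of_tower_mem _ (u i) (Submodule.subset_span ⟨i, rfl⟩ : w i ∈ Submodule.span L (Set.range w))
      have h2 : f (c • r) = algebraMap C L c • f r := by
        rw [map_smul, algebraMap_smul]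
      have h3 : f r = hcu.unit⁻¹ • f (c • r) := by
        rw [h2, Units.smul_def, smul_smul, IsUnit.val_inv_mul, one_smul]
      rw [h3]
      exact Submodule.smul_mem _ _ h1
    rintro x -
    induction x using LocalizedModule.induction_on with
    | h r s =>
      have : LocalizedModule.mk r s = Localization.mk 1 s • f r := by
        show _ = Localization.mk 1 s • LocalizedModule.mk r 1
        rw [LocalizedModule.mk_smul_mk, one_smul, mul_one]
      rw [this]
      exact Submodule.smul_mem _ _ (hfr r)
  exact ⟨Module.Basis.mk hli hsp, fun i => Module.Basis.mk_apply hli hsp i⟩
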